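/- arXiv:1907.02623 — 3 statements merged into one kernel-verified Lean document; each statement's English description precedes it below -/
import Mathlib

section
/- Let q be a positive integer with q ≡ 3 (mod 8). Then there exist integers a and b with q² = a² + 2b², a ≡ 1 (mod 4), and either 3q = a + 4b + 16 or 3q = a − 4b + 16, if and only if there exists an integer c with q = 12c² + 4c + 3. Moreover, when q = 12c² + 4c + 3, one may take a = 4c² + 12c + 1 and b = ±(8c² − 2). -/
private lemma step2 (x y : ℤ) (h : x ^ 2 = 2 * y) : ∃ m, x = 2 * m ∧ m ^ 2 * 2 = y := by
  have hx : Even x := by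
    have h2 : Even (x ^ 2) := ⟨y, by linarith⟩
    exact (Int.even_pow.mp h2).1
  obtain ⟨m, hm⟩ := hx
  subst hm
  exact ⟨m, by ring, by linarith [h]⟩

private lemma main_aux (q b : ℤ) (h8 : q % 8 = 3)
    (hD : (8 * q - 12 * b - 48) ^ 2 = 2 * (64 * (b + 2))) :
    ∃ c : ℤ, q = 12 * c ^ 2 + 4 * c + 3 := by
  obtain ⟨m1, hm1, h1⟩ := step2 _ _ hD
  have h1' : m1 ^ 2 = 2 * (16 * (b + 2)) := by linarith
  obtain ⟨m2, hm2, h2⟩ := step2 _ _ h1'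
  have h2' : m2 ^ 2 = 2 * (4 * (b + 2)) := by linarith
  obtain ⟨m3, hm3, h3⟩ := step2 _ _ h2'
  have h3' : m3 ^ 2 = 2 * (b + 2) := by linarith
  obtain ⟨f, hf, h4⟩ := step2 _ _ h3'
  have hb : b = 2 * f ^ 2 - 2 := by linarith
  have hqf : q = 3 * f ^ 2 + 2 * f + 3 := by
    have hDf : 8 * q - 12 * b - 48 = 16 * f := by
      rw [hm1, hm2, hm3, hf]; ring
    nlinarith [hDf, hb]
  rcases Int.even_or_odd f with ⟨c, hc⟩ | ⟨c, hc⟩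
  · exact ⟨c, by rw [hqf, hc]; ring⟩
  · exfalso
    rcases Int.even_or_odd c with ⟨d, hd⟩ | ⟨d, hd⟩
    · obtain ⟨X, hX⟩ : ∃ X, q = 8 * X := ⟨6 * d ^ 2 + 4 * d + 1, by rw [hqf, hc, hd]; ring⟩
      omega
    · obtain ⟨X, hX⟩ : ∃ X, q = 8 * X + 4 := ⟨6 * d ^ 2 + 10 * d + 4, by rw [hqf, hc, hd]; ring⟩
      omega

theorem stmt_15 (q : ℤ) (hq : 0 < q) (h8 : q % 8 = 3) :
    ((∃ a b : ℤ, q ^ 2 = a ^ 2 + 2 * b ^ 2 ∧ a % 4 = 1 ∧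
        (3 * q = a + 4 * b + 16 ∨ 3 * q = a - 4 * b + 16)) ↔
      ∃ c : ℤ, q = 12 * c ^ 2 + 4 * c + 3) ∧
    ∀ c : ℤ, q = 12 * c ^ 2 + 4 * c + 3 →
      q ^ 2 = (4 * c ^ 2 + 12 * c + 1) ^ 2 + 2 * (8 * c ^ 2 - 2) ^ 2 ∧
      (4 * c ^ 2 + 12 * c + 1) % 4 = 1 ∧
      (3 * q = (4 * c ^ 2 + 12 * c + 1) + 4 * (8 * c ^ 2 - 2) + 16 ∨
        3 * q = (4 * c ^ 2 + 12 * c + 1) - 4 * (8 * c ^ 2 - 2) + 16) := by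
  have more : ∀ c : ℤ, q = 12 * c ^ 2 + 4 * c + 3 →
      q ^ 2 = (4 * c ^ 2 + 12 * c + 1) ^ 2 + 2 * (8 * c ^ 2 - 2) ^ 2 ∧
      (4 * c ^ 2 + 12 * c + 1) % 4 = 1 ∧
      (3 * q = (4 * c ^ 2 + 12 * c + 1) + 4 * (8 * c ^ 2 - 2) + 16 ∨
        3 * q = (4 * c ^ 2 + 12 * c + 1) - 4 * (8 * c ^ 2 - 2) + 16) := by
    intro c hc
    refine ⟨by rw [hc]; ring, ?_, Or.inl (by rw [hc]; ring)⟩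
    obtain ⟨X, hX⟩ : ∃ X, 4 * c ^ 2 + 12 * c + 1 = 4 * X + 1 := ⟨c ^ 2 + 3 * c, by ring⟩
    omega
  refine ⟨⟨?_, ?_⟩, more⟩
  · rintro ⟨a, b, heq, ha4, hor | hor⟩
    · have ha : a = 3 * q - 4 * b - 16 := by linarith
      subst ha
      exact main_aux q b h8 (by linear_combination (-8 : ℤ) * heq)
    · have ha : a = 3 * q - 4 * (-b) - 16 := by linarith
      subst ha
      exact main_aux q (-b) h8 (by linear_combination (-8 : ℤ) * heq)
  · rintro ⟨c, hc⟩
    obtain ⟨h1, h2, h3⟩ := more c hc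
    exact ⟨_, _, h1, h2, h3⟩
end

section
/- Let n be a positive integer and let G be a finite abelian group of order 2n. Suppose there exist subsets B₀, B₁, B₂, B₃ ⊆ G with |B₀| = |B₁| = |B₂| = n and |B₃| = n − 1 such that for every nonzero g ∈ G, N(B₀,B₀;g) + N(B₁,B₁;g) + N(B₂,B₂;g) + N(B₃,B₃;g) = 2n − 2 (i.e., {B₀,B₁,B₂,B₃} is a difference family of type H₄* with parameters (2n; n, n, n, n−1; 2n−2) in G). Then there exists a Hadamard matrix of order 4(2n + 1), i.e., a square integer matrix H of size 4(2n+1) with all entries equal to 1 or −1 such that H · Hᵀ = 4(2n+1) · I. -/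
set_option linter.unusedSectionVars false
set_option maxHeartbeats 1000000

/-- The number of pairs `(u, v) ∈ A × B` with `u - v = g`. -/
noncomputable def diffCount {G : Type*} [AddGroup G] (A B : Set G) (g : G) : ℕ :=
  Set.ncard {p : G × G | p.1 ∈ A ∧ p.2 ∈ B ∧ p.1 - p.2 = g}

namespace Stmt16Aux
open Matrix

open Classical in
noncomputable def sgnFn {G : Type*} (B : Set G) : G → ℤ :=
  fun g => if g ∈ B then -1 else 1

noncomputable def bmat {G : Type*} [AddCommGroup G] (B : Set G) (ε : ℤ) :
    Matrix (Option G) (Option G) ℤ :=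
  Matrix.of fun x y =>
    match x, y with
    | none, none => ε
    | none, some _ => 1
    | some _, none => 1
    | some g, some h => sgnFn B (g - h)

def tau {G : Type*} [AddCommGroup G] : Option G → Option G := Option.map (fun g => -g)

noncomputable def rmat (G : Type*) [AddCommGroup G] [DecidableEq G] :
    Matrix (Option G) (Option G) ℤ :=
  Matrix.of fun x y => if tau x = y then 1 else 0

variable {G : Type*} [AddCommGroup G]

@[simp] lemma bmat_nn (B : Set G) (ε : ℤ) : bmat B ε none none = ε := rfl
@[simp] lemma bmat_ns (B : Set G) (ε : ℤ) (h : G) : bmat B ε none (some h) = 1 := rfl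
@[simp] lemma bmat_sn (B : Set G) (ε : ℤ) (g : G) : bmat B ε (some g) none = 1 := rfl
@[simp] lemma bmat_ss (B : Set G) (ε : ℤ) (g h : G) :
    bmat B ε (some g) (some h) = sgnFn B (g - h) := rfl

@[simp] lemma tau_tau (x : Option G) : tau (tau x) = x := by
  cases x <;> simp [tau]

lemma tau_eq_iff (x y : Option G) : tau x = y ↔ x = tau y := by
  constructor
  · rintro rfl; simp
  · rintro rfl; simp

lemma sgnFn_pm (B : Set G) (g : G) : sgnFn B g = 1 ∨ sgnFn B g = -1 := by
  by_cases h : g ∈ B <;> simp [sgnFn, h]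

variable [Fintype G] [DecidableEq G]

lemma sum_sub_left (c : G) (f : G → ℤ) : ∑ x : G, f (c - x) = ∑ x, f x :=
  Fintype.sum_equiv (Equiv.subLeft c) _ _ (fun _ => rfl)

lemma sum_sub_right (c : G) (f : G → ℤ) : ∑ x : G, f (x - c) = ∑ x, f x :=
  Fintype.sum_equiv (Equiv.subRight c) _ _ (fun _ => rfl)

lemma sum_conv_comm (f h : G → ℤ) (g k : G) :
    ∑ x : G, f (g - x) * h (x - k) = ∑ x : G, h (g - x) * f (x - k) := by
  rw [← sum_sub_left (g + k) (fun x => f (g - x) * h (x - k))]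
  apply Finset.sum_congr rfl
  intro x _
  have e1 : g - (g + k - x) = x - k := by abel
  have e2 : g + k - x - k = g - x := by abel
  rw [e1, e2, mul_comm]

lemma sum_corr_comm (f h : G → ℤ) (g k : G) :
    ∑ x : G, f (g - x) * h (k - x) = ∑ x : G, h (x - g) * f (x - k) := by
  rw [← sum_sub_left (g + k) (fun x => f (g - x) * h (k - x))]
  apply Finset.sum_congr rfl
  intro x _
  have e1 : g - (g + k - x) = x - k := by abel
  have e2 : k - (g + k - x) = x - g := by abel
  rw [e1, e2, mul_comm]

open Classical in
lemma sum_indicator (B : Set G) :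
    ∑ g : G, (if g ∈ B then (1:ℤ) else 0) = B.ncard := by
  rw [Finset.sum_boole, Set.ncard_eq_toFinset_card']
  norm_cast
  congr 1
  ext g
  simp

lemma sum_sgnFn (B : Set G) :
    ∑ g : G, sgnFn B g = (Fintype.card G : ℤ) - 2 * B.ncard := by
  classical
  have h : ∀ g : G, sgnFn B g = 1 - 2 * (if g ∈ B then (1:ℤ) else 0) := by
    intro g; by_cases h : g ∈ B <;> simp [sgnFn, h]
  rw [Finset.sum_congr rfl (fun g _ => h g)]
  rw [Finset.sum_sub_distrib, Finset.sum_const, ← Finset.mul_sum, sum_indicator]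
  simp [mul_comm]

open Classical in
lemma diffCount_eq_card (B C : Set G) (d : G) :
    (diffCount B C d : ℤ) = ((Finset.univ.filter (fun u : G => u ∈ B ∧ u - d ∈ C)).card : ℤ) := by
  have hset : {p : G × G | p.1 ∈ B ∧ p.2 ∈ C ∧ p.1 - p.2 = d}
      = (fun u : G => (u, u - d)) '' {u : G | u ∈ B ∧ u - d ∈ C} := by
    ext ⟨p1, p2⟩
    constructor
    · rintro ⟨h1, h2, h3⟩
      have hp : p2 = p1 - d := by rw [← h3]; abel
      exact ⟨p1, ⟨h1, by rwa [← hp]⟩, by simp [← hp]⟩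
    · rintro ⟨u, ⟨h1, h2⟩, heq⟩
      have e1 : p1 = u := (congrArg Prod.fst heq).symm
      have e2 : p2 = u - d := (congrArg Prod.snd heq).symm
      subst e1; subst e2
      exact ⟨h1, h2, sub_sub_cancel _ _⟩
  have hinj : Function.Injective (fun u : G => (u, u - d)) := by
    intro a b h
    exact (Prod.mk.injEq _ _ _ _).mp h |>.1
  rw [diffCount, hset, Set.ncard_image_of_injective _ hinj,
    Set.ncard_eq_toFinset_card']
  congr 2
  ext g
  simp

lemma diffCount_self_zero (B : Set G) : (diffCount B B (0:G) : ℤ) = B.ncard := by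
  classical
  rw [diffCount_eq_card, Set.ncard_eq_toFinset_card']
  norm_cast
  congr 1
  ext g
  simp

lemma corr_eq (B : Set G) (d : G) :
    ∑ u : G, sgnFn B u * sgnFn B (u - d)
      = (Fintype.card G : ℤ) - 4 * B.ncard + 4 * (diffCount B B d) := by
  classical
  have expand : ∀ u : G, sgnFn B u * sgnFn B (u - d)
      = 1 - 2 * (if u ∈ B then (1:ℤ) else 0) - 2 * (if u - d ∈ B then (1:ℤ) else 0)
        + 4 * (if u ∈ B ∧ u - d ∈ B then (1:ℤ) else 0) := by
    intro u
    by_cases h1 : u ∈ B <;> by_cases h2 : u - d ∈ B <;> simp [sgnFn, h1, h2]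
  rw [Finset.sum_congr rfl (fun u _ => expand u)]
  rw [Finset.sum_add_distrib, Finset.sum_sub_distrib, Finset.sum_sub_distrib,
    Finset.sum_const, ← Finset.mul_sum, ← Finset.mul_sum, ← Finset.mul_sum]
  rw [sum_indicator, sum_sub_right d (fun u => if u ∈ B then (1:ℤ) else 0)]
  rw [sum_indicator, Finset.sum_boole, diffCount_eq_card]
  simp only [Finset.card_univ]
  ring

lemma mul_apply_option (M N : Matrix (Option G) (Option G) ℤ) (x y : Option G) :
    (M * N) x y = M x none * N none y + ∑ z : G, M x (some z) * N (some z) y := by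
  rw [Matrix.mul_apply, Fintype.sum_option]

lemma mul_rmat_apply (M : Matrix (Option G) (Option G) ℤ) (x y : Option G) :
    (M * rmat G) x y = M x (tau y) := by
  rw [Matrix.mul_apply]
  have h : ∀ z : Option G, (rmat G) z y = if z = tau y then 1 else 0 := by
    intro z
    simp only [rmat, Matrix.of_apply, tau_eq_iff]
  simp only [h, mul_ite, mul_one, mul_zero]
  simp [Finset.sum_ite_eq']

lemma rmat_mul_apply (M : Matrix (Option G) (Option G) ℤ) (x y : Option G) :
    (rmat G * M) x y = M (tau x) y := by
  rw [Matrix.mul_apply]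
  simp only [rmat, Matrix.of_apply, ite_mul, one_mul, zero_mul]
  simp [Finset.sum_ite_eq]

lemma rmat_mul_rmat : rmat G * rmat G = 1 := by
  ext x y
  rw [rmat_mul_apply]
  simp only [rmat, Matrix.of_apply, tau_tau, Matrix.one_apply]

lemma rmat_transpose : (rmat G)ᵀ = rmat G := by
  ext x y
  simp only [Matrix.transpose_apply, rmat, Matrix.of_apply]
  congr 1
  rw [eq_iff_iff, tau_eq_iff, eq_comm, tau_eq_iff, eq_comm]

lemma bmat_transpose_eq (B : Set G) (ε : ℤ) :
    (bmat B ε)ᵀ = rmat G * bmat B ε * rmat G := by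
  ext x y
  rw [mul_rmat_apply, rmat_mul_apply, Matrix.transpose_apply]
  cases x <;> cases y <;> simp [tau]
  · congr 1
    abel

lemma bmat_RA (B : Set G) (ε : ℤ) :
    rmat G * (bmat B ε)ᵀ = bmat B ε * rmat G := by
  rw [bmat_transpose_eq, ← mul_assoc, ← mul_assoc, rmat_mul_rmat, one_mul]

/-- Two bordered matrices with row/column borders 1 commute, provided
the core row sums equal `ε + 1` for each. -/
lemma bmat_comm (B C : Set G) (εB εC : ℤ)
    (hB : ∑ g : G, sgnFn B g = εB + 1) (hC : ∑ g : G, sgnFn C g = εC + 1) :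
    bmat B εB * bmat C εC = bmat C εC * bmat B εB := by
  ext x y
  rw [mul_apply_option, mul_apply_option]
  cases x <;> cases y <;> simp only [bmat_nn, bmat_ns, bmat_sn, bmat_ss, mul_one, one_mul]
  · ring
  · rename_i h
    rw [sum_sub_right h (sgnFn C), sum_sub_right h (sgnFn B), hB, hC]
    ring
  · rename_i g
    rw [sum_sub_left g (sgnFn B), sum_sub_left g (sgnFn C), hB, hC]
    ring
  · rename_i g h
    rw [sum_conv_comm (sgnFn B) (sgnFn C) g h]

lemma bmat_comm_t (B C : Set G) (εB εC : ℤ)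
    (hB : ∑ g : G, sgnFn B g = εB + 1) (hC : ∑ g : G, sgnFn C g = εC + 1) :
    bmat B εB * (bmat C εC)ᵀ = (bmat C εC)ᵀ * bmat B εB := by
  ext x y
  rw [mul_apply_option, mul_apply_option]
  simp only [Matrix.transpose_apply]
  cases x <;> cases y <;> simp only [bmat_nn, bmat_ns, bmat_sn, bmat_ss, mul_one, one_mul]
  · ring
  · rename_i h
    rw [sum_sub_left h (sgnFn C), sum_sub_right h (sgnFn B), hB, hC]
    ring
  · rename_i g
    rw [sum_sub_left g (sgnFn B), sum_sub_right g (sgnFn C), hB, hC]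
    ring
  · rename_i g h
    rw [sum_corr_comm (sgnFn B) (sgnFn C) g h]

section GS

variable {I : Type*} [Fintype I] [DecidableEq I]

/-- The Goethals–Seidel array. -/
def gsArr (A : Fin 4 → Matrix I I ℤ) (R : Matrix I I ℤ) : Fin 4 → Fin 4 → Matrix I I ℤ :=
  fun i j =>
    match i, j with
    | ⟨0,_⟩, ⟨0,_⟩ => A 0
    | ⟨0,_⟩, ⟨1,_⟩ => A 1 * R
    | ⟨0,_⟩, ⟨2,_⟩ => A 2 * R
    | ⟨0,_⟩, ⟨3,_⟩ => A 3 * R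
    | ⟨1,_⟩, ⟨0,_⟩ => -(A 1 * R)
    | ⟨1,_⟩, ⟨1,_⟩ => A 0
    | ⟨1,_⟩, ⟨2,_⟩ => (A 3)ᵀ * R
    | ⟨1,_⟩, ⟨3,_⟩ => -((A 2)ᵀ * R)
    | ⟨2,_⟩, ⟨0,_⟩ => -(A 2 * R)
    | ⟨2,_⟩, ⟨1,_⟩ => -((A 3)ᵀ * R)
    | ⟨2,_⟩, ⟨2,_⟩ => A 0
    | ⟨2,_⟩, ⟨3,_⟩ => (A 1)ᵀ * R
    | ⟨3,_⟩, ⟨0,_⟩ => -(A 3 * R)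
    | ⟨3,_⟩, ⟨1,_⟩ => (A 2)ᵀ * R
    | ⟨3,_⟩, ⟨2,_⟩ => -((A 1)ᵀ * R)
    | ⟨3,_⟩, ⟨3,_⟩ => A 0

section
variable (A : Fin 4 → Matrix I I ℤ) (R : Matrix I I ℤ)
lemma gs00 : gsArr A R 0 0 = A 0 := rfl
lemma gs01 : gsArr A R 0 1 = A 1 * R := rfl
lemma gs02 : gsArr A R 0 2 = A 2 * R := rfl
lemma gs03 : gsArr A R 0 3 = A 3 * R := rfl
lemma gs10 : gsArr A R 1 0 = -(A 1 * R) := rfl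
lemma gs11 : gsArr A R 1 1 = A 0 := rfl
lemma gs12 : gsArr A R 1 2 = (A 3)ᵀ * R := rfl
lemma gs13 : gsArr A R 1 3 = -((A 2)ᵀ * R) := rfl
lemma gs20 : gsArr A R 2 0 = -(A 2 * R) := rfl
lemma gs21 : gsArr A R 2 1 = -((A 3)ᵀ * R) := rfl
lemma gs22 : gsArr A R 2 2 = A 0 := rfl
lemma gs23 : gsArr A R 2 3 = (A 1)ᵀ * R := rfl
lemma gs30 : gsArr A R 3 0 = -(A 3 * R) := rfl
lemma gs31 : gsArr A R 3 1 = (A 2)ᵀ * R := rfl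
lemma gs32 : gsArr A R 3 2 = -((A 1)ᵀ * R) := rfl
lemma gs33 : gsArr A R 3 3 = A 0 := rfl
end

lemma gs_blocks (A : Fin 4 → Matrix I I ℤ) (R : Matrix I I ℤ) (c : ℤ)
    (hRR : R * R = 1) (hRT : Rᵀ = R)
    (hRA : ∀ i, R * (A i)ᵀ = A i * R)
    (hcomm : ∀ i j, A i * A j = A j * A i)
    (hcommT : ∀ i j, A i * (A j)ᵀ = (A j)ᵀ * A i)
    (hsq : A 0 * (A 0)ᵀ + A 1 * (A 1)ᵀ + A 2 * (A 2)ᵀ + A 3 * (A 3)ᵀ = c • 1) :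
    ∀ i k : Fin 4, ∑ j, gsArr A R i j * (gsArr A R k j)ᵀ
      = if i = k then c • (1 : Matrix I I ℤ) else 0 := by
  have hAt : ∀ i, (A i)ᵀ = R * A i * R := by
    intro i
    calc (A i)ᵀ = (R * R) * (A i)ᵀ := by rw [hRR, one_mul]
    _ = R * (R * (A i)ᵀ) := by rw [mul_assoc]
    _ = R * (A i * R) := by rw [hRA]
    _ = R * A i * R := by rw [mul_assoc]
  have hAR : ∀ i, (A i)ᵀ * R = R * A i := by
    intro i; rw [hAt, mul_assoc, mul_assoc, hRR, mul_one]
  have hsymm : ∀ i, (A i * R)ᵀ = A i * R := by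
    intro i; rw [transpose_mul, hRT, hRA]
  have hsymmT : ∀ i, ((A i)ᵀ * R)ᵀ = (A i)ᵀ * R := by
    intro i; rw [transpose_mul, transpose_transpose, hRT]; exact (hAR i).symm
  have hinner1 : ∀ j, R * (A j * R) = (A j)ᵀ := by
    intro j; rw [← mul_assoc, ← hAt]
  have hinner2 : ∀ j, R * ((A j)ᵀ * R) = A j := by
    intro j; rw [← mul_assoc, hRA, mul_assoc, hRR, mul_one]
  have q1 : ∀ (X : Matrix I I ℤ) (j : Fin 4), (X * R) * (A j * R) = X * (A j)ᵀ := by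
    intro X j; rw [mul_assoc, hinner1]
  have q2 : ∀ (X : Matrix I I ℤ) (j : Fin 4), (X * R) * ((A j)ᵀ * R) = X * A j := by
    intro X j; rw [mul_assoc, hinner2]
  have q3 : ∀ (X : Matrix I I ℤ) (j : Fin 4), (X * R) * (A j)ᵀ = X * A j * R := by
    intro X j; rw [mul_assoc, hRA, ← mul_assoc]
  have hcommTT : ∀ i j, (A i)ᵀ * (A j)ᵀ = (A j)ᵀ * (A i)ᵀ := by
    intro i j
    have := congrArg Matrix.transpose (hcomm j i)
    simpa [Matrix.transpose_mul] using this
  have H00 : ∑ j, gsArr A R 0 j * (gsArr A R 0 j)ᵀ = c • (1 : Matrix I I ℤ) := by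
    rw [Fin.sum_univ_four, gs00, gs01, gs02, gs03]
    simp only [hsymm]
    rw [q1 (A 1) 1, q1 (A 2) 2, q1 (A 3) 3]
    exact hsq
  have H11 : ∑ j, gsArr A R 1 j * (gsArr A R 1 j)ᵀ = c • (1 : Matrix I I ℤ) := by
    rw [Fin.sum_univ_four, gs10, gs11, gs12, gs13]
    simp only [transpose_neg, hsymm, hsymmT, mul_neg, neg_mul, neg_neg]
    rw [q1 (A 1) 1, q2 ((A 3)ᵀ) 3, q2 ((A 2)ᵀ) 2, ← hcommT 3 3, ← hcommT 2 2, ← hsq]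
    abel
  have H22 : ∑ j, gsArr A R 2 j * (gsArr A R 2 j)ᵀ = c • (1 : Matrix I I ℤ) := by
    rw [Fin.sum_univ_four, gs20, gs21, gs22, gs23]
    simp only [transpose_neg, hsymm, hsymmT, mul_neg, neg_mul, neg_neg]
    rw [q1 (A 2) 2, q2 ((A 3)ᵀ) 3, q2 ((A 1)ᵀ) 1, ← hcommT 3 3, ← hcommT 1 1, ← hsq]
    abel
  have H33 : ∑ j, gsArr A R 3 j * (gsArr A R 3 j)ᵀ = c • (1 : Matrix I I ℤ) := by
    rw [Fin.sum_univ_four, gs30, gs31, gs32, gs33]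
    simp only [transpose_neg, hsymm, hsymmT, mul_neg, neg_mul, neg_neg]
    rw [q1 (A 3) 3, q2 ((A 2)ᵀ) 2, q2 ((A 1)ᵀ) 1, ← hcommT 2 2, ← hcommT 1 1, ← hsq]
    abel
  have H01 : ∑ j, gsArr A R 0 j * (gsArr A R 1 j)ᵀ = (0 : Matrix I I ℤ) := by
    rw [Fin.sum_univ_four, gs00, gs01, gs02, gs03, gs10, gs11, gs12, gs13]
    simp only [transpose_neg, hsymm, hsymmT, mul_neg, neg_mul, neg_neg]
    rw [q3 (A 1) 0, q2 (A 2) 3, q2 (A 3) 2, ← mul_assoc (A 0) (A 1) R,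
      hcomm 0 1, hcomm 2 3]
    abel
  have H10 : ∑ j, gsArr A R 1 j * (gsArr A R 0 j)ᵀ = (0 : Matrix I I ℤ) := by
    rw [Fin.sum_univ_four, gs10, gs11, gs12, gs13, gs00, gs01, gs02, gs03]
    simp only [transpose_neg, hsymm, hsymmT, mul_neg, neg_mul, neg_neg]
    rw [q3 (A 1) 0, q1 ((A 3)ᵀ) 2, q1 ((A 2)ᵀ) 3, ← mul_assoc (A 0) (A 1) R,
      hcomm 0 1, hcommTT 3 2]
    abel
  have H02 : ∑ j, gsArr A R 0 j * (gsArr A R 2 j)ᵀ = (0 : Matrix I I ℤ) := by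
    rw [Fin.sum_univ_four, gs00, gs01, gs02, gs03, gs20, gs21, gs22, gs23]
    simp only [transpose_neg, hsymm, hsymmT, mul_neg, neg_mul, neg_neg]
    rw [q3 (A 2) 0, q2 (A 1) 3, q2 (A 3) 1, ← mul_assoc (A 0) (A 2) R,
      hcomm 0 2, hcomm 1 3]
    abel
  have H20 : ∑ j, gsArr A R 2 j * (gsArr A R 0 j)ᵀ = (0 : Matrix I I ℤ) := by
    rw [Fin.sum_univ_four, gs20, gs21, gs22, gs23, gs00, gs01, gs02, gs03]
    simp only [transpose_neg, hsymm, hsymmT, mul_neg, neg_mul, neg_neg]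
    rw [q3 (A 2) 0, q1 ((A 3)ᵀ) 1, q1 ((A 1)ᵀ) 3, ← mul_assoc (A 0) (A 2) R,
      hcomm 0 2, hcommTT 1 3]
    abel
  have H03 : ∑ j, gsArr A R 0 j * (gsArr A R 3 j)ᵀ = (0 : Matrix I I ℤ) := by
    rw [Fin.sum_univ_four, gs00, gs01, gs02, gs03, gs30, gs31, gs32, gs33]
    simp only [transpose_neg, hsymm, hsymmT, mul_neg, neg_mul, neg_neg]
    rw [q3 (A 3) 0, q2 (A 1) 2, q2 (A 2) 1, ← mul_assoc (A 0) (A 3) R,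
      hcomm 0 3, hcomm 1 2]
    abel
  have H30 : ∑ j, gsArr A R 3 j * (gsArr A R 0 j)ᵀ = (0 : Matrix I I ℤ) := by
    rw [Fin.sum_univ_four, gs30, gs31, gs32, gs33, gs00, gs01, gs02, gs03]
    simp only [transpose_neg, hsymm, hsymmT, mul_neg, neg_mul, neg_neg]
    rw [q3 (A 3) 0, q1 ((A 2)ᵀ) 1, q1 ((A 1)ᵀ) 2, ← mul_assoc (A 0) (A 3) R,
      hcomm 0 3, hcommTT 2 1]
    abel
  have H12 : ∑ j, gsArr A R 1 j * (gsArr A R 2 j)ᵀ = (0 : Matrix I I ℤ) := by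
    rw [Fin.sum_univ_four, gs10, gs11, gs12, gs13, gs20, gs21, gs22, gs23]
    simp only [transpose_neg, hsymm, hsymmT, mul_neg, neg_mul, neg_neg]
    rw [q1 (A 1) 2, q3 ((A 3)ᵀ) 0, q2 ((A 2)ᵀ) 1, ← mul_assoc (A 0) ((A 3)ᵀ) R,
      hcommT 1 2, hcommT 0 3]
    abel
  have H21 : ∑ j, gsArr A R 2 j * (gsArr A R 1 j)ᵀ = (0 : Matrix I I ℤ) := by
    rw [Fin.sum_univ_four, gs20, gs21, gs22, gs23, gs10, gs11, gs12, gs13]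
    simp only [transpose_neg, hsymm, hsymmT, mul_neg, neg_mul, neg_neg]
    rw [q1 (A 2) 1, q3 ((A 3)ᵀ) 0, q2 ((A 1)ᵀ) 2, ← mul_assoc (A 0) ((A 3)ᵀ) R,
      hcommT 2 1, hcommT 0 3]
    abel
  have H13 : ∑ j, gsArr A R 1 j * (gsArr A R 3 j)ᵀ = (0 : Matrix I I ℤ) := by
    rw [Fin.sum_univ_four, gs10, gs11, gs12, gs13, gs30, gs31, gs32, gs33]
    simp only [transpose_neg, hsymm, hsymmT, mul_neg, neg_mul, neg_neg]
    rw [q1 (A 1) 3, q2 ((A 3)ᵀ) 1, q3 ((A 2)ᵀ) 0, ← mul_assoc (A 0) ((A 2)ᵀ) R,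
      hcommT 1 3, hcommT 0 2]
    abel
  have H31 : ∑ j, gsArr A R 3 j * (gsArr A R 1 j)ᵀ = (0 : Matrix I I ℤ) := by
    rw [Fin.sum_univ_four, gs30, gs31, gs32, gs33, gs10, gs11, gs12, gs13]
    simp only [transpose_neg, hsymm, hsymmT, mul_neg, neg_mul, neg_neg]
    rw [q1 (A 3) 1, q2 ((A 1)ᵀ) 3, q3 ((A 2)ᵀ) 0, ← mul_assoc (A 0) ((A 2)ᵀ) R,
      hcommT 3 1, hcommT 0 2]
    abel
  have H23 : ∑ j, gsArr A R 2 j * (gsArr A R 3 j)ᵀ = (0 : Matrix I I ℤ) := by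
    rw [Fin.sum_univ_four, gs20, gs21, gs22, gs23, gs30, gs31, gs32, gs33]
    simp only [transpose_neg, hsymm, hsymmT, mul_neg, neg_mul, neg_neg]
    rw [q1 (A 2) 3, q2 ((A 3)ᵀ) 2, q3 ((A 1)ᵀ) 0, ← mul_assoc (A 0) ((A 1)ᵀ) R,
      hcommT 2 3, hcommT 0 1]
    abel
  have H32 : ∑ j, gsArr A R 3 j * (gsArr A R 2 j)ᵀ = (0 : Matrix I I ℤ) := by
    rw [Fin.sum_univ_four, gs30, gs31, gs32, gs33, gs20, gs21, gs22, gs23]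
    simp only [transpose_neg, hsymm, hsymmT, mul_neg, neg_mul, neg_neg]
    rw [q1 (A 3) 2, q2 ((A 2)ᵀ) 3, q3 ((A 1)ᵀ) 0, ← mul_assoc (A 0) ((A 1)ᵀ) R,
      hcommT 3 2, hcommT 0 1]
    abel
  intro i k
  fin_cases i <;> fin_cases k
  · exact H00
  · exact H01
  · exact H02
  · exact H03
  · exact H10
  · exact H11
  · exact H12
  · exact H13
  · exact H20
  · exact H21
  · exact H22
  · exact H23
  · exact H30
  · exact H31
  · exact H32
  · exact H33


end GS

end Stmt16Aux

namespace Stmt16Aux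
open Matrix

section Big
variable {I : Type*} [Fintype I] [DecidableEq I]

lemma big_mul (M : Fin 4 → Fin 4 → Matrix I I ℤ) (c : ℤ)
    (hblk : ∀ i k, ∑ j, M i j * (M k j)ᵀ
      = if i = k then c • (1 : Matrix I I ℤ) else 0) :
    (Matrix.of fun (p q : Fin 4 × I) => M p.1 q.1 p.2 q.2) *
      (Matrix.of fun (p q : Fin 4 × I) => M p.1 q.1 p.2 q.2)ᵀ
      = c • (1 : Matrix (Fin 4 × I) (Fin 4 × I) ℤ) := by
  ext ⟨i, x⟩ ⟨k, y⟩
  rw [Matrix.mul_apply, Fintype.sum_prod_type]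
  have h1 : ∀ j : Fin 4, ∑ z : I,
      (Matrix.of fun (p q : Fin 4 × I) => M p.1 q.1 p.2 q.2) (i,x) (j,z) *
      (Matrix.of fun (p q : Fin 4 × I) => M p.1 q.1 p.2 q.2)ᵀ (j,z) (k,y)
      = (M i j * (M k j)ᵀ) x y := by
    intro j
    rw [Matrix.mul_apply]
    apply Finset.sum_congr rfl
    intro z _
    simp [Matrix.transpose_apply]
  rw [Finset.sum_congr rfl (fun j _ => h1 j), ← Matrix.sum_apply, hblk i k]
  by_cases hik : i = k
  · subst hik
    simp only [if_true, Matrix.smul_apply, Matrix.one_apply, smul_eq_mul]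
    by_cases hxy : x = y
    · subst hxy; simp
    · simp [hxy, Prod.ext_iff]
  · simp [hik, Matrix.smul_apply, Matrix.one_apply, Prod.ext_iff]

end Big

end Stmt16Aux

namespace Stmt16Aux
open Matrix

variable {G : Type*} [AddCommGroup G] [Fintype G] [DecidableEq G]

lemma bmat_sum_sq (n : ℕ) (hn : 0 < n) (hG : Fintype.card G = 2 * n)
    (B₀ B₁ B₂ B₃ : Set G)
    (hB₀ : B₀.ncard = n) (hB₁ : B₁.ncard = n) (hB₂ : B₂.ncard = n)
    (hB₃ : B₃.ncard = n - 1)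
    (hDF : ∀ g : G, g ≠ 0 →
      diffCount B₀ B₀ g + diffCount B₁ B₁ g + diffCount B₂ B₂ g + diffCount B₃ B₃ g
        = 2 * n - 2) :
    bmat B₀ (-1) * (bmat B₀ (-1))ᵀ + bmat B₁ (-1) * (bmat B₁ (-1))ᵀ
      + bmat B₂ (-1) * (bmat B₂ (-1))ᵀ + bmat B₃ 1 * (bmat B₃ 1)ᵀ
      = (4 * (2 * (n:ℤ) + 1)) • 1 := by
  ext x y
  have expand : ∀ (B : Set G) (e : ℤ), (bmat B e * (bmat B e)ᵀ) x y
      = bmat B e x none * bmat B e y none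
        + ∑ z : G, bmat B e x (some z) * bmat B e y (some z) := by
    intro B e
    rw [mul_apply_option]
    simp only [Matrix.transpose_apply]
  simp only [Matrix.add_apply]
  rw [expand, expand, expand, expand]
  cases x with
  | none =>
    cases y with
    | none =>
      simp only [bmat_nn, bmat_ns, mul_one, one_mul]
      rw [Finset.sum_const, Finset.card_univ, hG, Matrix.smul_apply,
        Matrix.one_apply_eq, smul_eq_mul, mul_one]
      push_cast
      ring
    | some h =>
      simp only [bmat_nn, bmat_ns, bmat_sn, bmat_ss, mul_one, one_mul]
      rw [sum_sub_left h (sgnFn B₀), sum_sub_left h (sgnFn B₁),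
        sum_sub_left h (sgnFn B₂), sum_sub_left h (sgnFn B₃),
        sum_sgnFn, sum_sgnFn, sum_sgnFn, sum_sgnFn, hG, hB₀, hB₁, hB₂, hB₃,
        Nat.cast_sub hn, Matrix.smul_apply,
        Matrix.one_apply_ne (by simp : (none : Option G) ≠ some h), smul_zero]
      push_cast
      ring
  | some g =>
    cases y with
    | none =>
      simp only [bmat_nn, bmat_ns, bmat_sn, bmat_ss, mul_one, one_mul]
      rw [sum_sub_left g (sgnFn B₀), sum_sub_left g (sgnFn B₁),
        sum_sub_left g (sgnFn B₂), sum_sub_left g (sgnFn B₃),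
        sum_sgnFn, sum_sgnFn, sum_sgnFn, sum_sgnFn, hG, hB₀, hB₁, hB₂, hB₃,
        Nat.cast_sub hn, Matrix.smul_apply,
        Matrix.one_apply_ne (by simp : (some g : Option G) ≠ none), smul_zero]
      push_cast
      ring
    | some h =>
      simp only [bmat_nn, bmat_ns, bmat_sn, bmat_ss, mul_one, one_mul]
      have key : ∀ B : Set G, ∑ z : G, sgnFn B (g - z) * sgnFn B (h - z)
          = (Fintype.card G : ℤ) - 4 * B.ncard + 4 * (diffCount B B (g - h)) := by
        intro B
        rw [← corr_eq B (g - h),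
          ← sum_sub_left g (fun u => sgnFn B u * sgnFn B (u - (g - h)))]
        apply Finset.sum_congr rfl
        intro z _
        have e1 : g - z - (g - h) = h - z := by abel
        rw [e1]
      rw [key B₀, key B₁, key B₂, key B₃, hG, hB₀, hB₁, hB₂, hB₃]
      by_cases hgh : g = h
      · subst hgh
        rw [sub_self, diffCount_self_zero, diffCount_self_zero,
          diffCount_self_zero, diffCount_self_zero, hB₀, hB₁, hB₂, hB₃,
          Matrix.smul_apply, Matrix.one_apply_eq, smul_eq_mul, mul_one,
          Nat.cast_sub hn]
        push_cast
        ring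
      · have hd := hDF (g - h) (sub_ne_zero_of_ne hgh)
        have h2 : (2:ℕ) ≤ 2 * n := by omega
        have hdz : (diffCount B₀ B₀ (g - h) : ℤ) + (diffCount B₁ B₁ (g - h) : ℤ)
            + (diffCount B₂ B₂ (g - h) : ℤ) + (diffCount B₃ B₃ (g - h) : ℤ)
            = 2 * (n:ℤ) - 2 := by
          have hc := congrArg (fun t : ℕ => (t : ℤ)) hd
          push_cast [Nat.cast_sub h2] at hc
          linarith
        rw [Matrix.smul_apply,
          Matrix.one_apply_ne (by simp [hgh] : (some g : Option G) ≠ some h),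
          smul_zero, Nat.cast_sub hn]
        push_cast
        linarith

end Stmt16Aux

open Matrix Stmt16Aux

theorem stmt_16 (n : ℕ) (hn : 0 < n)
    (G : Type*) [AddCommGroup G] [Fintype G] (hG : Fintype.card G = 2 * n)
    (B₀ B₁ B₂ B₃ : Set G)
    (hB₀ : B₀.ncard = n) (hB₁ : B₁.ncard = n) (hB₂ : B₂.ncard = n)
    (hB₃ : B₃.ncard = n - 1)
    (hDF : ∀ g : G, g ≠ 0 →
      diffCount B₀ B₀ g + diffCount B₁ B₁ g + diffCount B₂ B₂ g + diffCount B₃ B₃ g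
        = 2 * n - 2) :
    ∃ H : Matrix (Fin (4 * (2 * n + 1))) (Fin (4 * (2 * n + 1))) ℤ,
      (∀ i j, H i j = 1 ∨ H i j = -1) ∧
      H * H.transpose = (4 * (2 * n + 1) : ℤ) • 1 := by
  classical
  letI : DecidableEq G := Classical.decEq G
  set R : Matrix (Option G) (Option G) ℤ := Stmt16Aux.rmat G with hR
  let Bs : Fin 4 → Set G := fun i =>
    match i with
    | ⟨0,_⟩ => B₀ | ⟨1,_⟩ => B₁ | ⟨2,_⟩ => B₂ | ⟨3,_⟩ => B₃
  let es : Fin 4 → ℤ := fun i =>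
    match i with
    | ⟨0,_⟩ => -1 | ⟨1,_⟩ => -1 | ⟨2,_⟩ => -1 | ⟨3,_⟩ => 1
  set A : Fin 4 → Matrix (Option G) (Option G) ℤ := fun i => bmat (Bs i) (es i) with hA
  have hsum : ∀ i, ∑ g : G, sgnFn (Bs i) g = es i + 1 := by
    intro i
    fin_cases i
    · show ∑ g : G, sgnFn B₀ g = -1 + 1
      rw [sum_sgnFn, hG, hB₀]; push_cast; ring
    · show ∑ g : G, sgnFn B₁ g = -1 + 1
      rw [sum_sgnFn, hG, hB₁]; push_cast; ring
    · show ∑ g : G, sgnFn B₂ g = -1 + 1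
      rw [sum_sgnFn, hG, hB₂]; push_cast; ring
    · show ∑ g : G, sgnFn B₃ g = 1 + 1
      rw [sum_sgnFn, hG, hB₃, Nat.cast_sub hn]; push_cast; ring
  have hRA : ∀ i, R * (A i)ᵀ = A i * R := fun i => bmat_RA (Bs i) (es i)
  have hcomm : ∀ i j, A i * A j = A j * A i := fun i j =>
    bmat_comm _ _ _ _ (hsum i) (hsum j)
  have hcommT : ∀ i j, A i * (A j)ᵀ = (A j)ᵀ * A i := fun i j =>
    bmat_comm_t _ _ _ _ (hsum i) (hsum j)
  have hsq : A 0 * (A 0)ᵀ + A 1 * (A 1)ᵀ + A 2 * (A 2)ᵀ + A 3 * (A 3)ᵀ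
      = (4 * (2 * (n:ℤ) + 1)) • 1 :=
    bmat_sum_sq n hn hG B₀ B₁ B₂ B₃ hB₀ hB₁ hB₂ hB₃ hDF
  have hblk := gs_blocks A R (4 * (2 * (n:ℤ) + 1)) rmat_mul_rmat rmat_transpose
    hRA hcomm hcommT hsq
  set HB : Matrix (Fin 4 × Option G) (Fin 4 × Option G) ℤ :=
    Matrix.of fun p q => gsArr A R p.1 q.1 p.2 q.2 with hHBdef
  have hHB : HB * HBᵀ = (4 * (2 * (n:ℤ) + 1)) • 1 := big_mul _ _ hblk
  have hpmA : ∀ i (x y : Option G), A i x y = 1 ∨ A i x y = -1 := by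
    intro i x y
    have he : es i = 1 ∨ es i = -1 := by
      fin_cases i
      · exact Or.inr rfl
      · exact Or.inr rfl
      · exact Or.inr rfl
      · exact Or.inl rfl
    cases x <;> cases y
    · exact he
    · exact Or.inl rfl
    · exact Or.inl rfl
    · exact sgnFn_pm _ _
  have hpmR : ∀ (X : Matrix (Option G) (Option G) ℤ),
      (∀ x y, X x y = 1 ∨ X x y = -1) →
      ∀ x y, (X * R) x y = 1 ∨ (X * R) x y = -1 := by
    intro X hX x y
    rw [show (X * R) x y = X x (tau y) from mul_rmat_apply X x y]
    exact hX _ _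
  have hpmT : ∀ (X : Matrix (Option G) (Option G) ℤ),
      (∀ x y, X x y = 1 ∨ X x y = -1) →
      ∀ x y, Xᵀ x y = 1 ∨ Xᵀ x y = -1 := fun X hX x y => hX y x
  have hpmN : ∀ (X : Matrix (Option G) (Option G) ℤ),
      (∀ x y, X x y = 1 ∨ X x y = -1) →
      ∀ x y, (-X) x y = 1 ∨ (-X) x y = -1 := by
    intro X hX x y
    rcases hX x y with h | h <;> simp [Matrix.neg_apply, h]
  have hpm : ∀ (i k : Fin 4) (x y : Option G),
      gsArr A R i k x y = 1 ∨ gsArr A R i k x y = -1 := by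
    intro i k x y
    fin_cases i <;> fin_cases k
    · exact hpmA 0 x y
    · exact hpmR (A 1) (hpmA 1) x y
    · exact hpmR (A 2) (hpmA 2) x y
    · exact hpmR (A 3) (hpmA 3) x y
    · exact hpmN (A 1 * R) (hpmR (A 1) (hpmA 1)) x y
    · exact hpmA 0 x y
    · exact hpmR ((A 3)ᵀ) (hpmT (A 3) (hpmA 3)) x y
    · exact hpmN ((A 2)ᵀ * R) (hpmR ((A 2)ᵀ) (hpmT (A 2) (hpmA 2))) x y
    · exact hpmN (A 2 * R) (hpmR (A 2) (hpmA 2)) x y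
    · exact hpmN ((A 3)ᵀ * R) (hpmR ((A 3)ᵀ) (hpmT (A 3) (hpmA 3))) x y
    · exact hpmA 0 x y
    · exact hpmR ((A 1)ᵀ) (hpmT (A 1) (hpmA 1)) x y
    · exact hpmN (A 3 * R) (hpmR (A 3) (hpmA 3)) x y
    · exact hpmR ((A 2)ᵀ) (hpmT (A 2) (hpmA 2)) x y
    · exact hpmN ((A 1)ᵀ * R) (hpmR ((A 1)ᵀ) (hpmT (A 1) (hpmA 1))) x y
    · exact hpmA 0 x y
  have ecard : 4 * (2 * n + 1) = Fintype.card (Fin 4 × Option G) := by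
    simp [Fintype.card_prod, Fintype.card_option, hG]
  let e : Fin (4 * (2 * n + 1)) ≃ (Fin 4 × Option G) :=
    Fintype.equivOfCardEq (by rw [Fintype.card_fin]; exact ecard)
  refine ⟨HB.submatrix e e, ?_, ?_⟩
  · intro i j
    exact hpm (e i).1 (e j).1 (e i).2 (e j).2
  · have h1 : (HB.submatrix e e)ᵀ = HBᵀ.submatrix e e := Matrix.transpose_submatrix _ _ _
    rw [show HB.submatrix e e * (HB.submatrix e e).transpose
        = HB.submatrix e e * (HB.submatrix e e)ᵀ from rfl, h1,
      Matrix.submatrix_mul_equiv HB HBᵀ _ e _, hHB]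
    have h2 : (((4 * (2 * (n:ℤ) + 1))) • (1 : Matrix (Fin 4 × Option G) (Fin 4 × Option G) ℤ)).submatrix e e
        = (4 * (2 * (n:ℤ) + 1)) • ((1 : Matrix (Fin 4 × Option G) (Fin 4 × Option G) ℤ).submatrix e e) := rfl
    rw [h2, Matrix.submatrix_one_equiv]
end

section
/- Let G be a finite abelian group of order v. Suppose there exist subsets B₀, B₁, B₂, B₃ ⊆ G with |Bᵢ| = kᵢ and an integer λ with k₀ + k₁ + k₂ + k₃ − v = λ such that for every nonzero g ∈ G, N(B₀,B₀;g) + N(B₁,B₁;g) + N(B₂,B₂;g) + N(B₃,B₃;g) = λ (i.e., {B₀,B₁,B₂,B₃} is a difference family of type H in G). Then there exists a Hadamard matrix of order 4v, i.e., a 4v × 4v integer matrix H with all entries equal to 1 or −1 such that H · Hᵀ = 4v · I. -/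
namespace Stmt17Aux

open Finset Matrix

set_option linter.unusedSectionVars false

attribute [local instance] Classical.propDecidable

variable {G : Type*} [AddCommGroup G] [Fintype G]

noncomputable def chi (B : Set G) (x : G) : ℤ := if x ∈ B then 1 else 0

noncomputable def ff (B : Set G) (x : G) : ℤ := 1 - 2 * chi B x

lemma ff_pm (B : Set G) (x : G) : ff B x = 1 ∨ ff B x = -1 := by
  unfold ff chi; split <;> simp

lemma neg_pm {a : ℤ} (h : a = 1 ∨ a = -1) : -a = 1 ∨ -a = -1 := by
  rcases h with rfl | rfl <;> simp

lemma ff_sq (B : Set G) (x : G) : ff B x * ff B x = 1 := by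
  rcases ff_pm B x with h | h <;> rw [h] <;> ring

lemma sum_chi (B : Set G) : ∑ x : G, chi B x = B.ncard := by
  rw [Set.ncard_eq_toFinset_card']
  unfold chi
  rw [Finset.sum_boole]
  congr 2
  ext x; simp

lemma chi_mul (B C : Set G) (x y : G) :
    chi B x * chi C y = if x ∈ B ∧ y ∈ C then 1 else 0 := by
  unfold chi; split_ifs with h1 h2 h3 <;> simp_all

lemma sum_chi2 (B : Set G) (d : G) :
    ∑ u : G, chi B (u + d) * chi B u = ({z : G | z + d ∈ B ∧ z ∈ B} : Set G).ncard := by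
  rw [Set.ncard_eq_toFinset_card']
  simp only [chi_mul]
  rw [Finset.sum_boole]
  congr 2
  ext x; simp

lemma diffCount_set (B : Set G) (d : G) :
    ({p : G × G | p.1 ∈ B ∧ p.2 ∈ B ∧ p.1 - p.2 = d} : Set (G × G)) =
      (fun z => (z + d, z)) '' {z : G | z + d ∈ B ∧ z ∈ B} := by
  ext ⟨a, b⟩
  simp only [Set.mem_setOf_eq, Set.mem_image, Prod.mk.injEq]
  constructor
  · rintro ⟨h1, h2, h3⟩
    refine ⟨b, ⟨?_, h2⟩, ?_, rfl⟩ <;>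
      · rw [show b + d = a by rw [← h3]; abel]; try exact h1
  · rintro ⟨z, ⟨hz1, hz2⟩, rfl, rfl⟩
    exact ⟨hz1, hz2, by abel⟩

lemma diffCount_eq (B : Set G) (d : G) :
    ((diffCount B B d : ℕ) : ℤ) = ∑ u : G, chi B (u + d) * chi B u := by
  rw [sum_chi2]
  unfold diffCount
  rw [diffCount_set]
  rw [Set.ncard_image_of_injective _ (fun a b h => by
    simpa using (Prod.ext_iff.1 h).2)]

lemma sum_chi_shift (B : Set G) (d : G) :
    ∑ u : G, chi B (u + d) = ∑ u : G, chi B u :=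
  Fintype.sum_equiv (Equiv.addRight d) _ _ (fun u => by simp)

noncomputable def Qc (f g : G → ℤ) (c : G) : ℤ := ∑ u, f u * g (u + c)
noncomputable def Pc (f g : G → ℤ) (c : G) : ℤ := ∑ u, f u * g (c - u)

lemma Pc_symm (f g : G → ℤ) (c : G) : Pc f g c = Pc g f c := by
  refine Fintype.sum_equiv (Equiv.subLeft c) _ _ fun u => ?_
  simp [mul_comm, sub_sub_cancel]

lemma Qc_flip (f g : G → ℤ) (c : G) : Qc f g c = Qc g f (-c) := by
  refine Fintype.sum_equiv (Equiv.addRight c) _ _ fun u => ?_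
  simp [mul_comm]

lemma Qc_ff_zero (B : Set G) : Qc (ff B) (ff B) 0 = Fintype.card G := by
  unfold Qc
  simp only [add_zero, ff_sq]
  simp

lemma Qc_ff (B : Set G) (d : G) :
    Qc (ff B) (ff B) d = (Fintype.card G : ℤ) - 4 * B.ncard + 4 * diffCount B B d := by
  unfold Qc ff
  rw [Finset.sum_congr rfl (fun u _ => show
    (1 - 2 * chi B u) * (1 - 2 * chi B (u + d))
      = 1 - 2 * chi B u - 2 * chi B (u + d) + 4 * (chi B (u + d) * chi B u) from by ring)]
  rw [Finset.sum_add_distrib, Finset.sum_sub_distrib, Finset.sum_sub_distrib,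
    ← Finset.mul_sum, ← Finset.mul_sum, ← Finset.mul_sum]
  rw [sum_chi_shift, sum_chi, ← diffCount_eq]
  simp [Finset.card_univ]
  ring

lemma LQ1 (f g : G → ℤ) (x y : G) : ∑ z, f (x + z) * g (y + z) = Qc f g (y - x) := by
  refine Fintype.sum_equiv (Equiv.addLeft x) _ _ fun z => ?_
  simp only [Equiv.coe_addLeft, Equiv.subLeft_apply]
  try rw [show x + z + (y - x) = y + z by abel]
  try rfl

lemma LQ2 (f g : G → ℤ) (x y : G) : ∑ z, f (x - z) * g (y - z) = Qc f g (y - x) := by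
  refine Fintype.sum_equiv (Equiv.subLeft x) _ _ fun z => ?_
  simp only [Equiv.coe_addLeft, Equiv.subLeft_apply]
  try rw [show x - z + (y - x) = y - z by abel]
  try rfl

lemma LQ3 (f g : G → ℤ) (x y : G) : ∑ z, f (-(x + z)) * g (-(y + z)) = Qc f g (x - y) := by
  refine Fintype.sum_equiv (Equiv.subLeft (-x)) _ _ fun z => ?_
  simp only [Equiv.coe_addLeft, Equiv.subLeft_apply]
  try rw [show -x - z = -(x+z) by abel, show -(x + z) + (x - y) = -(y + z) by abel]
  try rfl

lemma LQ4 (f g : G → ℤ) (x y : G) : ∑ z, f (x - z) * g (-(y + z)) = Qc f g (-(x + y)) := by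
  refine Fintype.sum_equiv (Equiv.subLeft x) _ _ fun z => ?_
  simp only [Equiv.coe_addLeft, Equiv.subLeft_apply]
  try rw [show x - z + -(x + y) = -(y + z) by abel]
  try rfl

lemma LQ5 (f g : G → ℤ) (x y : G) : ∑ z, f (-(x + z)) * g (y - z) = Qc g f (-(x + y)) := by
  refine Fintype.sum_equiv (Equiv.subLeft y) _ _ fun z => ?_
  simp only [Equiv.coe_addLeft, Equiv.subLeft_apply]
  try rw [show y - z + -(x + y) = -(x + z) by abel]
  try exact mul_comm _ _
  try rfl

lemma LP1 (f g : G → ℤ) (x y : G) : ∑ z, f (x + z) * g (y - z) = Pc f g (x + y) := by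
  refine Fintype.sum_equiv (Equiv.addLeft x) _ _ fun z => ?_
  simp only [Equiv.coe_addLeft, Equiv.subLeft_apply]
  try rw [show x + y - (x + z) = y - z by abel]
  try rfl

lemma LP2 (f g : G → ℤ) (x y : G) : ∑ z, f (x - z) * g (y + z) = Pc f g (x + y) := by
  refine Fintype.sum_equiv (Equiv.subLeft x) _ _ fun z => ?_
  simp only [Equiv.coe_addLeft, Equiv.subLeft_apply]
  try rw [show x + y - (x - z) = y + z by abel]
  try rfl

lemma LP3 (f g : G → ℤ) (x y : G) : ∑ z, f (x + z) * g (-(y + z)) = Pc f g (x - y) := by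
  refine Fintype.sum_equiv (Equiv.addLeft x) _ _ fun z => ?_
  simp only [Equiv.coe_addLeft, Equiv.subLeft_apply]
  try rw [show x - y - (x + z) = -(y + z) by abel]
  try rfl

lemma LP4 (f g : G → ℤ) (x y : G) : ∑ z, f (-(x + z)) * g (y + z) = Pc g f (y - x) := by
  refine Fintype.sum_equiv (Equiv.addLeft y) _ _ fun z => ?_
  simp only [Equiv.coe_addLeft, Equiv.subLeft_apply]
  try rw [show y - x - (y + z) = -(x + z) by abel]
  try exact mul_comm _ _
  try rfl

/-- The Goethals–Seidel array of block-entry functions. -/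
def GSrow (f0 f1 f2 f3 : G → ℤ) : Fin 4 → Fin 4 → G → G → ℤ :=
![![fun x z => f0 (x - z), fun x z => f1 (x + z), fun x z => f2 (x + z), fun x z => f3 (x + z)],
  ![fun x z => -f1 (x + z), fun x z => f0 (x - z), fun x z => -f3 (-(x + z)), fun x z => f2 (-(x + z))],
  ![fun x z => -f2 (x + z), fun x z => f3 (-(x + z)), fun x z => f0 (x - z), fun x z => -f1 (-(x + z))],
  ![fun x z => -f3 (x + z), fun x z => -f2 (-(x + z)), fun x z => f1 (-(x + z)), fun x z => f0 (x - z)]]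

lemma GS_orth (f0 f1 f2 f3 : G → ℤ) (w : ℤ)
    (hQ : ∀ d : G, Qc f0 f0 d + Qc f1 f1 d + Qc f2 f2 d + Qc f3 f3 d
      = if d = 0 then w else 0)
    (i j : Fin 4) (x y : G) :
    ∑ k : Fin 4, ∑ z : G, GSrow f0 f1 f2 f3 i k x z * GSrow f0 f1 f2 f3 j k y z
      = if i = j ∧ x = y then w else 0 := by
  have diag : ∀ x y : G,
      Qc f0 f0 (y - x) + Qc f1 f1 (y - x) + Qc f2 f2 (y - x) + Qc f3 f3 (y - x)
        = if x = y then w else 0 := by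
    intro x y
    rcases eq_or_ne x y with rfl | hne
    · rw [if_pos rfl, sub_self]
      have h := hQ 0
      rw [if_pos rfl] at h
      linarith
    · rw [if_neg hne]
      have h := hQ (y - x)
      rw [if_neg (sub_ne_zero.mpr (Ne.symm hne))] at h
      linarith
  have hfin : ∀ t : Fin 4, t = 0 ∨ t = 1 ∨ t = 2 ∨ t = 3 := by decide
  rcases hfin i with rfl | rfl | rfl | rfl <;> rcases hfin j with rfl | rfl | rfl | rfl <;>
    rw [Fin.sum_univ_four] <;>
    simp only [GSrow, Matrix.cons_val_zero, Matrix.cons_val_one, Matrix.head_cons,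
      Matrix.cons_val_two, Matrix.tail_cons, Matrix.cons_val_three, Matrix.head_fin_const] <;>
    simp only [neg_mul, mul_neg, neg_neg, Finset.sum_neg_distrib,
      LQ1, LQ2, LQ3, LQ4, LQ5, LP1, LP2, LP3, LP4]
  -- (0,0)
  · simp only [true_and]; rw [← diag x y]; try ring
  -- (0,1)
  · rw [if_neg (by simp), Pc_symm f1 f0, Pc_symm f3 f2]; ring
  -- (0,2)
  · rw [if_neg (by simp), Pc_symm f2 f0, Pc_symm f3 f1]; ring
  -- (0,3)
  · rw [if_neg (by simp), Pc_symm f2 f1, Pc_symm f3 f0]; ring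
  -- (1,0)
  · rw [if_neg (by simp), Pc_symm f1 f0, Pc_symm f3 f2]; ring
  -- (1,1)
  · simp only [true_and]
    rw [← diag x y,
      Qc_flip f3 f3 (x - y), Qc_flip f2 f2 (x - y), neg_sub]; ring
  -- (1,2)
  · rw [if_neg (by simp), Qc_flip f2 f1 (x - y), neg_sub]; ring
  -- (1,3)
  · rw [if_neg (by simp), Qc_flip f3 f1 (x - y), neg_sub]; ring
  -- (2,0)
  · rw [if_neg (by simp), Pc_symm f2 f0, Pc_symm f3 f1]; ring
  -- (2,1)
  · rw [if_neg (by simp), Qc_flip f1 f2 (x - y), neg_sub]; ring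
  -- (2,2)
  · simp only [true_and]
    rw [← diag x y,
      Qc_flip f3 f3 (x - y), Qc_flip f1 f1 (x - y), neg_sub]; ring
  -- (2,3)
  · rw [if_neg (by simp), Qc_flip f3 f2 (x - y), neg_sub]; ring
  -- (3,0)
  · rw [if_neg (by simp), Pc_symm f3 f0, Pc_symm f2 f1]; ring
  -- (3,1)
  · rw [if_neg (by simp), Qc_flip f1 f3 (x - y), neg_sub]; ring
  -- (3,2)
  · rw [if_neg (by simp), Qc_flip f2 f3 (x - y), neg_sub]; ring
  -- (3,3)
  · simp only [true_and]
    rw [← diag x y,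
      Qc_flip f2 f2 (x - y), Qc_flip f1 f1 (x - y), neg_sub]; ring

/-- The Goethals–Seidel matrix. -/
noncomputable def GSmat (f0 f1 f2 f3 : G → ℤ) : Matrix (Fin 4 × G) (Fin 4 × G) ℤ :=
  fun p q => GSrow f0 f1 f2 f3 p.1 q.1 p.2 q.2

lemma GSmat_pm (f0 f1 f2 f3 : G → ℤ)
    (h0 : ∀ x, f0 x = 1 ∨ f0 x = -1) (h1 : ∀ x, f1 x = 1 ∨ f1 x = -1)
    (h2 : ∀ x, f2 x = 1 ∨ f2 x = -1) (h3 : ∀ x, f3 x = 1 ∨ f3 x = -1)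
    (p q : Fin 4 × G) :
    GSmat f0 f1 f2 f3 p q = 1 ∨ GSmat f0 f1 f2 f3 p q = -1 := by
  obtain ⟨i, x⟩ := p; obtain ⟨k, z⟩ := q
  have hfin : ∀ t : Fin 4, t = 0 ∨ t = 1 ∨ t = 2 ∨ t = 3 := by decide
  rcases hfin i with rfl | rfl | rfl | rfl <;> rcases hfin k with rfl | rfl | rfl | rfl <;>
    simp only [GSmat, GSrow, Matrix.cons_val_zero, Matrix.cons_val_one, Matrix.head_cons,
      Matrix.cons_val_two, Matrix.tail_cons, Matrix.cons_val_three, Matrix.head_fin_const] <;>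
    first
      | exact h0 _ | exact h1 _ | exact h2 _ | exact h3 _
      | exact neg_pm (h0 _) | exact neg_pm (h1 _) | exact neg_pm (h2 _) | exact neg_pm (h3 _)

lemma GSmat_mul (f0 f1 f2 f3 : G → ℤ) (w : ℤ)
    (hQ : ∀ d : G, Qc f0 f0 d + Qc f1 f1 d + Qc f2 f2 d + Qc f3 f3 d
      = if d = 0 then w else 0) :
    GSmat f0 f1 f2 f3 * (GSmat f0 f1 f2 f3)ᵀ = w • 1 := by
  ext ⟨i, x⟩ ⟨j, y⟩
  rw [Matrix.mul_apply]
  simp only [Matrix.transpose_apply, Matrix.smul_apply, Matrix.one_apply, smul_eq_mul]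
  rw [Fintype.sum_prod_type]
  have := GS_orth f0 f1 f2 f3 w hQ i j x y
  simp only [GSmat] at *
  rw [this]
  by_cases h : i = j ∧ x = y
  · rw [if_pos h, if_pos (Prod.ext_iff.mpr ⟨h.1, h.2⟩), mul_one]
  · rw [if_neg h, if_neg (fun hc => h ⟨(Prod.ext_iff.1 hc).1, (Prod.ext_iff.1 hc).2⟩), mul_zero]

end Stmt17Aux

open Stmt17Aux Matrix in
theorem stmt_17 (v : ℕ)
    (G : Type*) [AddCommGroup G] [Fintype G] (hG : Fintype.card G = v)
    (B₀ B₁ B₂ B₃ : Set G) (k₀ k₁ k₂ k₃ : ℕ) (lam : ℤ)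
    (hB₀ : B₀.ncard = k₀) (hB₁ : B₁.ncard = k₁) (hB₂ : B₂.ncard = k₂)
    (hB₃ : B₃.ncard = k₃)
    (hlam : (k₀ : ℤ) + k₁ + k₂ + k₃ - v = lam)
    (hDF : ∀ g : G, g ≠ 0 →
      (diffCount B₀ B₀ g + diffCount B₁ B₁ g + diffCount B₂ B₂ g + diffCount B₃ B₃ g : ℤ)
        = lam) :
    ∃ H : Matrix (Fin (4 * v)) (Fin (4 * v)) ℤ,
      (∀ i j, H i j = 1 ∨ H i j = -1) ∧
      H * H.transpose = (4 * v : ℤ) • 1 := by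
  classical
  set f0 := ff B₀ with hf0
  set f1 := ff B₁ with hf1
  set f2 := ff B₂ with hf2
  set f3 := ff B₃ with hf3
  have hQ : ∀ d : G, Qc f0 f0 d + Qc f1 f1 d + Qc f2 f2 d + Qc f3 f3 d
      = if d = 0 then (4 * (v:ℤ)) else 0 := by
    intro d
    by_cases hd : d = 0
    · subst hd
      rw [if_pos rfl, hf0, hf1, hf2, hf3, Qc_ff_zero, Qc_ff_zero, Qc_ff_zero, Qc_ff_zero, hG]
      ring
    · rw [if_neg hd, hf0, hf1, hf2, hf3, Qc_ff, Qc_ff, Qc_ff, Qc_ff, hB₀, hB₁, hB₂, hB₃, hG]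
      have h := hDF d hd
      linarith
  have cardEq : Fintype.card (Fin 4 × G) = 4 * v := by simp [hG]
  let e : (Fin 4 × G) ≃ Fin (4 * v) := Fintype.equivFinOfCardEq cardEq
  refine ⟨(GSmat f0 f1 f2 f3).submatrix e.symm e.symm, ?_, ?_⟩
  · intro i j
    exact GSmat_pm f0 f1 f2 f3 (ff_pm B₀) (ff_pm B₁) (ff_pm B₂) (ff_pm B₃) _ _
  · have hmul := GSmat_mul f0 f1 f2 f3 (4 * (v:ℤ)) hQ
    have step : (GSmat f0 f1 f2 f3).submatrix e.symm e.symm *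
        ((GSmat f0 f1 f2 f3).submatrix e.symm e.symm)ᵀ
        = ((GSmat f0 f1 f2 f3 * (GSmat f0 f1 f2 f3)ᵀ)).submatrix e.symm e.symm := by
      rw [Matrix.transpose_submatrix, Matrix.submatrix_mul_equiv]
    rw [step, hmul]
    ext i j
    simp only [Matrix.submatrix_apply, Matrix.smul_apply, Matrix.one_apply,
      EmbeddingLike.apply_eq_iff_eq, smul_eq_mul]
end
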